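/- If r_1 > 1 and r_{N−1} < 1, then ρ_A < 1/N implies ρ_B > 1/N, and ρ_B < 1/N implies ρ_A > 1/N; in particular ρ_A < 1/N and ρ_B < 1/N cannot both hold (the evolutionary scenario B, top arrows →←, bottom arrows ⇐⇒, is forbidden). -/

import Mathlib

/-- if r_1 > 1 and r_{N-1} < 1 then ρ_A < 1/N implies ρ_B > 1/N,
ρ_B < 1/N implies ρ_A > 1/N; in particular ρ_A < 1/N and ρ_B < 1/N cannot both hold. -/
theorem moran_mutual_invasion_forbidden_scenario
    (N : ℕ) (hN : 3 ≤ N) (a b c d w : ℝ)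
    (ha : 0 < a) (hb : 0 < b) (hc : 0 < c) (hd : 0 < d)
    (hw0 : 0 ≤ w) (hw1 : w ≤ 1)
    (r : ℕ → ℝ)
    (hr : ∀ i, 1 ≤ i → i ≤ N - 1 →
      r i = (1 - w + w * (a * ((i : ℝ) - 1) / ((N : ℝ) - 1) +
                b * ((N : ℝ) - (i : ℝ)) / ((N : ℝ) - 1))) /
            (1 - w + w * (c * (i : ℝ) / ((N : ℝ) - 1) +
                d * ((N : ℝ) - (i : ℝ) - 1) / ((N : ℝ) - 1))))
    (hrpos : ∀ i, 1 ≤ i → i ≤ N - 1 → 0 < r i)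
    (π : ℕ → ℝ) (hπ0 : π 0 = 0) (hπN : π N = 1)
    (hπ : ∀ i, 1 ≤ i → i ≤ N - 1 →
      π i = (1 + ∑ j ∈ Finset.Icc 1 (i - 1), ∏ k ∈ Finset.Icc 1 j, (r k)⁻¹) /
            (1 + ∑ j ∈ Finset.Icc 1 (N - 1), ∏ k ∈ Finset.Icc 1 j, (r k)⁻¹))
    (hr1 : 1 < r 1) (hrN1 : r (N - 1) < 1) :
    (π 1 < 1 / (N : ℝ) → 1 / (N : ℝ) < 1 - π (N - 1)) ∧
    (1 - π (N - 1) < 1 / (N : ℝ) → 1 / (N : ℝ) < π 1) ∧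
    ¬(π 1 < 1 / (N : ℝ) ∧ 1 - π (N - 1) < 1 / (N : ℝ)) := by
  have hN3 : (3:ℝ) ≤ (N:ℝ) := by exact_mod_cast hN
  have hden : (0:ℝ) < (N:ℝ) - 1 := by linarith
  have hNR : ((N-1 : ℕ) : ℝ) = (N:ℝ) - 1 := by
    have h1 : 1 ≤ N := by omega
    push_cast [h1]
    ring
  -- the linear payoff-difference function
  set Q : ℕ → ℝ := fun i =>
    a * ((i : ℝ) - 1) + b * ((N : ℝ) - (i : ℝ)) - c * (i : ℝ)
      - d * ((N : ℝ) - (i : ℝ) - 1) with hQdef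
  -- positivity of denominator g_i
  have hG : ∀ i : ℕ, 1 ≤ i → i ≤ N - 1 →
      0 < 1 - w + w * (c * (i : ℝ) / ((N : ℝ) - 1) +
        d * ((N : ℝ) - (i : ℝ) - 1) / ((N : ℝ) - 1)) := by
    intro i h1 h2
    have hi1 : (1:ℝ) ≤ (i:ℝ) := by exact_mod_cast h1
    have hi2 : (i:ℝ) ≤ (N:ℝ) - 1 := by
      rw [← hNR]; exact_mod_cast h2
    have hx : 0 < c * (i:ℝ) / ((N:ℝ) - 1) := by positivity
    have hy : 0 ≤ d * ((N:ℝ) - (i:ℝ) - 1) / ((N:ℝ) - 1) := by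
      apply div_nonneg _ hden.le
      nlinarith
    rcases eq_or_lt_of_le hw0 with h | h
    · rw [← h]; norm_num
    · nlinarith
  -- sign of r i - 1 is the sign of w * Q i
  have hsub : ∀ i : ℕ,
      (1 - w + w * (a * ((i : ℝ) - 1) / ((N : ℝ) - 1) +
          b * ((N : ℝ) - (i : ℝ)) / ((N : ℝ) - 1))) -
      (1 - w + w * (c * (i : ℝ) / ((N : ℝ) - 1) +
          d * ((N : ℝ) - (i : ℝ) - 1) / ((N : ℝ) - 1))) =
      w * Q i / ((N:ℝ) - 1) := by
    intro i
    rw [hQdef]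
    field_simp
    ring
  have hlt : ∀ i : ℕ, 1 ≤ i → i ≤ N - 1 → (r i < 1 ↔ w * Q i < 0) := by
    intro i h1 h2
    rw [hr i h1 h2, div_lt_one (hG i h1 h2)]
    have := hsub i
    constructor
    · intro h
      have h' : w * Q i / ((N:ℝ) - 1) < 0 := by linarith
      rw [div_lt_iff₀ hden] at h'; linarith
    · intro h
      have h' : w * Q i / ((N:ℝ) - 1) < 0 := by
        rw [div_lt_iff₀ hden]; linarith
      linarith
  have hgt : ∀ i : ℕ, 1 ≤ i → i ≤ N - 1 → (1 < r i ↔ 0 < w * Q i) := by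
    intro i h1 h2
    rw [hr i h1 h2, lt_div_iff₀ (hG i h1 h2), one_mul]
    have := hsub i
    constructor
    · intro h
      have h' : 0 < w * Q i / ((N:ℝ) - 1) := by linarith
      rw [lt_div_iff₀ hden] at h'; linarith
    · intro h
      have h' : 0 < w * Q i / ((N:ℝ) - 1) := by
        rw [lt_div_iff₀ hden]; linarith
      linarith
  have hbound1 : 1 ≤ N - 1 := by omega
  have hboundN : N - 1 ≤ N - 1 := le_refl _
  have hwQ1 : 0 < w * Q 1 := (hgt 1 le_rfl hbound1).mp hr1
  have hw : 0 < w := by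
    rcases eq_or_lt_of_le hw0 with h | h
    · exfalso; rw [← h] at hwQ1; simp at hwQ1
    · exact h
  have hQ1 : 0 < Q 1 := by
    by_contra hg
    push_neg at hg
    have := mul_nonpos_of_nonneg_of_nonpos hw.le hg
    linarith
  have hwQN : w * Q (N-1) < 0 := (hlt (N-1) hbound1 hboundN).mp hrN1
  have hQN : Q (N-1) < 0 := by
    by_contra hg
    push_neg at hg
    have := mul_nonneg hw.le hg
    linarith
  have hslope : ∀ k k' : ℕ, Q k' - Q k = (a - b - c + d) * ((k':ℝ) - (k:ℝ)) := by
    intro k k'; rw [hQdef]; push_cast; ring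
  have hs : a - b - c + d < 0 := by
    have h := hslope 1 (N-1)
    rw [hNR] at h
    push_cast at h
    by_contra hg
    push_neg at hg
    have hm : 0 ≤ (a - b - c + d) * ((N:ℝ) - 1 - 1) := mul_nonneg hg (by linarith)
    linarith
  have hdec : ∀ k k' : ℕ, 1 ≤ k → k < k' → k' ≤ N - 1 → r k < 1 → r k' < 1 := by
    intro k k' h1 h2 h3 hk
    have hk2 : k ≤ N - 1 := by omega
    have hQk : Q k < 0 := by
      have hh := (hlt k h1 hk2).mp hk
      by_contra hg
      push_neg at hg
      have := mul_nonneg hw.le hg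
      linarith
    have hkk : (k:ℝ) < (k':ℝ) := by exact_mod_cast h2
    have hQk' : Q k' < 0 := by
      have h := hslope k k'
      have hm : (a - b - c + d) * ((k':ℝ) - (k:ℝ)) < 0 :=
        mul_neg_of_neg_of_pos hs (by linarith)
      linarith
    rw [hlt k' (by omega) h3]
    exact mul_neg_of_pos_of_neg hw hQk'
  -- the partial products
  set P : ℕ → ℝ := fun j => ∏ k ∈ Finset.Icc 1 j, (r k)⁻¹ with hPdef
  have hPpos : ∀ j, j ≤ N - 1 → 0 < P j := by
    intro j hj
    rw [hPdef]
    apply Finset.prod_pos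
    intro k hk
    rw [Finset.mem_Icc] at hk
    exact inv_pos.mpr (hrpos k hk.1 (le_trans hk.2 hj))
  have hic : ∀ m : ℕ, Finset.Icc 1 m = Finset.Ioc 0 m := fun m => Finset.Icc_add_one_left_eq_Ioc 0 m
  have hPle : ∀ j, 1 ≤ j → j ≤ N - 1 → P j ≤ max 1 (P (N - 1)) := by
    intro j h1 hj
    by_cases hall : ∀ k ∈ Finset.Icc 1 j, 1 ≤ r k
    · refine le_trans ?_ (le_max_left _ _)
      rw [hPdef]
      apply Finset.prod_le_one
      · intro k hk
        rw [Finset.mem_Icc] at hk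
        exact (inv_pos.mpr (hrpos k hk.1 (le_trans hk.2 hj))).le
      · intro k hk
        exact inv_le_one_of_one_le₀ (hall k hk)
    · push_neg at hall
      obtain ⟨k0, hk0mem, hk0⟩ := hall
      rw [Finset.mem_Icc] at hk0mem
      refine le_trans ?_ (le_max_right _ _)
      have hsplit : P j * ∏ k ∈ Finset.Ioc j (N-1), (r k)⁻¹ = P (N-1) := by
        simp only [hPdef, hic]
        exact Finset.prod_Ioc_consecutive _ (Nat.zero_le j) hj
      have hone : 1 ≤ ∏ k ∈ Finset.Ioc j (N-1), (r k)⁻¹ := by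
        have hcmp := Finset.prod_le_prod (s := Finset.Ioc j (N-1))
          (f := fun _ => (1:ℝ)) (g := fun k => (r k)⁻¹)
          (by intro k hk; norm_num)
          (by
            intro k hk
            rw [Finset.mem_Ioc] at hk
            have hrk : r k < 1 := hdec k0 k hk0mem.1 (by omega) hk.2 hk0
            have hrkpos : 0 < r k := hrpos k (by omega) hk.2
            exact (one_lt_inv₀ hrkpos).2 hrk |>.le)
        simpa using hcmp
      calc P j = P j * 1 := by ring
        _ ≤ P j * ∏ k ∈ Finset.Ioc j (N-1), (r k)⁻¹ :=
            mul_le_mul_of_nonneg_left hone (hPpos j hj).le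
        _ = P (N-1) := hsplit
  have hP1lt : P 1 < 1 := by
    rw [hPdef]
    simp only [Finset.Icc_self, Finset.prod_singleton]
    exact inv_lt_one_of_one_lt₀ hr1
  have hsum : (1 + ∑ j ∈ Finset.Icc 1 (N-1), P j) = ∑ j ∈ Finset.Icc 0 (N-1), P j := by
    have h0 : Finset.Icc 0 (N-1) = insert 0 (Finset.Icc 1 (N-1)) := by
      ext x
      simp only [Finset.mem_Icc, Finset.mem_insert]
      omega
    rw [h0, Finset.sum_insert (by simp)]
    have hP0 : P 0 = 1 := by simp [hPdef]
    rw [hP0]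
  have hScard : (Finset.Icc 0 (N-1)).card = N := by
    rw [Nat.card_Icc]; omega
  have hSlt : ∑ j ∈ Finset.Icc 0 (N-1), P j < (N:ℝ) * max 1 (P (N-1)) := by
    calc ∑ j ∈ Finset.Icc 0 (N-1), P j
        < ∑ _j ∈ Finset.Icc 0 (N-1), max 1 (P (N-1)) := by
          apply Finset.sum_lt_sum
          · intro i hi
            rw [Finset.mem_Icc] at hi
            rcases Nat.eq_zero_or_pos i with h | h
            · subst h
              have hP0 : P 0 = 1 := by simp [hPdef]
              rw [hP0]
              exact le_max_left _ _
            · exact hPle i h hi.2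
          · exact ⟨1, by rw [Finset.mem_Icc]; omega,
              lt_of_lt_of_le hP1lt (le_max_left _ _)⟩
      _ = (N:ℝ) * max 1 (P (N-1)) := by
          rw [Finset.sum_const, hScard, nsmul_eq_mul]
  have hsumpos : 0 ≤ ∑ j ∈ Finset.Icc 1 (N-1), P j :=
    Finset.sum_nonneg (fun j hj => (hPpos j (Finset.mem_Icc.mp hj).2).le)
  have hSpos : 0 < 1 + ∑ j ∈ Finset.Icc 1 (N-1), P j := by linarith
  have hSN : (1 + ∑ j ∈ Finset.Icc 1 (N-1), P j) < (N:ℝ) * max 1 (P (N-1)) := by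
    rw [hsum]; exact hSlt
  have hNpos : (0:ℝ) < (N:ℝ) := by linarith
  have hPN : 0 < P (N-1) := hPpos _ le_rfl
  have hpi1 : π 1 = 1 / (1 + ∑ j ∈ Finset.Icc 1 (N-1), P j) := by
    rw [hπ 1 le_rfl hbound1]
    norm_num
  have hpiN : 1 - π (N-1) = P (N-1) / (1 + ∑ j ∈ Finset.Icc 1 (N-1), P j) := by
    have e := hπ (N-1) hbound1 hboundN
    rw [show (∑ j ∈ Finset.Icc 1 ((N-1) - 1), ∏ k ∈ Finset.Icc 1 j, (r k)⁻¹)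
          = ∑ j ∈ Finset.Icc 1 (N-1-1), P j from rfl,
        show (∑ j ∈ Finset.Icc 1 (N - 1), ∏ k ∈ Finset.Icc 1 j, (r k)⁻¹)
          = ∑ j ∈ Finset.Icc 1 (N-1), P j from rfl] at e
    have hsplit2 : ∑ j ∈ Finset.Icc 1 (N-1), P j
        = (∑ j ∈ Finset.Icc 1 (N-1-1), P j) + P (N-1) := by
      have h : N - 1 = (N-1-1) + 1 := by omega
      rw [h, Finset.sum_Icc_succ_top (by omega : 1 ≤ N-1-1+1), ← h]
    rw [e, hsplit2]
    have hne : (1 + ((∑ j ∈ Finset.Icc 1 (N-1-1), P j) + P (N-1))) ≠ 0 := by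
      rw [← hsplit2]; exact ne_of_gt hSpos
    field_simp
    ring
  have himp1 : π 1 < 1 / (N : ℝ) → 1 / (N : ℝ) < 1 - π (N - 1) := by
    intro h
    rw [hpi1, div_lt_div_iff₀ hSpos hNpos] at h
    rw [hpiN, div_lt_div_iff₀ hNpos hSpos]
    have hcm : (N:ℝ) * P (N-1) = P (N-1) * (N:ℝ) := mul_comm _ _
    rcases le_or_gt (P (N-1)) 1 with hle | hlt'
    · exfalso
      rw [max_eq_left hle] at hSN
      linarith
    · rw [max_eq_right hlt'.le] at hSN
      linarith
  have himp2 : 1 - π (N - 1) < 1 / (N : ℝ) → 1 / (N : ℝ) < π 1 := by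
    intro h
    rw [hpiN, div_lt_div_iff₀ hSpos hNpos] at h
    rw [hpi1, div_lt_div_iff₀ hNpos hSpos]
    have hcm : (N:ℝ) * P (N-1) = P (N-1) * (N:ℝ) := mul_comm _ _
    rcases le_or_gt (P (N-1)) 1 with hle | hlt'
    · rw [max_eq_left hle] at hSN
      linarith
    · exfalso
      rw [max_eq_right hlt'.le] at hSN
      linarith
  exact ⟨himp1, himp2, fun ⟨h1, h2⟩ => absurd (himp1 h1) (not_lt.mpr h2.le)⟩
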